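/- Let τ≥0, t0≥0, t≥t0, and let ψ:[t0−τ,t]→ℝ be continuous and nonnegative. For s∈[t0,t] define ‖ψ_s‖ = sup{ψ(s+r): r∈[−τ,0]}. Suppose there are constants K,L≥0 such that ψ(ℓ) ≤ K + L∫_{t0}^{ℓ} ‖ψ_s‖ ds for all ℓ∈[t0,t]. Then ‖ψ_ℓ‖ ≤ (K+‖ψ_{t0}‖) e^{L(ℓ−t0)} for all ℓ∈[t0,t]. -/

import Mathlib

open Set Filter MeasureTheory Topology

/-- The supremum of `ψ` over the memory window `[s-τ, s]` (the norm `‖ψ_s‖` of the segment). -/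
noncomputable def segSup (τ : ℝ) (ψ : ℝ → ℝ) (s : ℝ) : ℝ :=
  sSup (ψ '' Icc (s - τ) s)

/-- Lemma A.1 (Gronwall-type inequality for functions with memory): if a continuous
nonnegative `ψ` satisfies `ψ(ℓ) ≤ K + L ∫_{t0}^{ℓ} ‖ψ_s‖ ds` on `[t0, t]`, then
`‖ψ_ℓ‖ ≤ (K + ‖ψ_{t0}‖) e^{L(ℓ - t0)}` on `[t0, t]`. -/
theorem gronwall_with_memory (τ : ℝ) (hτ : 0 ≤ τ) (t0 t : ℝ) (ht0 : 0 ≤ t0) (ht : t0 ≤ t)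
    (ψ : ℝ → ℝ) (hcont : ContinuousOn ψ (Icc (t0 - τ) t))
    (hnonneg : ∀ s ∈ Icc (t0 - τ) t, 0 ≤ ψ s)
    (K L : ℝ) (hK : 0 ≤ K) (hL : 0 ≤ L)
    (hineq : ∀ ℓ ∈ Icc t0 t, ψ ℓ ≤ K + L * ∫ s in t0..ℓ, segSup τ ψ s) :
    ∀ ℓ ∈ Icc t0 t, segSup τ ψ ℓ ≤ (K + segSup τ ψ t0) * Real.exp (L * (ℓ - t0)) := by
  set φ : ℝ → ℝ := segSup τ ψ with hφdef
  -- window inside domain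
  have hsub : ∀ ℓ ∈ Icc t0 t, Icc (ℓ - τ) ℓ ⊆ Icc (t0 - τ) t := by
    intro ℓ hℓ x hx
    exact ⟨by linarith [hx.1, hℓ.1], by linarith [hx.2, hℓ.2]⟩
  have hne : ∀ ℓ : ℝ, (ψ '' Icc (ℓ - τ) ℓ).Nonempty := by
    intro ℓ
    exact ⟨ψ ℓ, mem_image_of_mem _ (right_mem_Icc.2 (by linarith))⟩
  have hbdd : ∀ ℓ ∈ Icc t0 t, BddAbove (ψ '' Icc (ℓ - τ) ℓ) := by
    intro ℓ hℓ
    exact (isCompact_Icc.image_of_continuousOn (hcont.mono (hsub ℓ hℓ))).bddAbove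
  have hle : ∀ ℓ ∈ Icc t0 t, ∀ u ∈ Icc (ℓ - τ) ℓ, ψ u ≤ φ ℓ := by
    intro ℓ hℓ u hu
    exact le_csSup (hbdd ℓ hℓ) (mem_image_of_mem _ hu)
  have hφ0 : ∀ ℓ ∈ Icc t0 t, 0 ≤ φ ℓ := by
    intro ℓ hℓ
    have hmem : ℓ ∈ Icc (ℓ - τ) ℓ := right_mem_Icc.2 (by linarith)
    exact (hnonneg ℓ (hsub ℓ hℓ hmem)).trans (hle ℓ hℓ ℓ hmem)
  -- uniform continuity of ψ on the compact domain
  have huc : UniformContinuousOn ψ (Icc (t0 - τ) t) :=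
    isCompact_Icc.uniformContinuousOn_of_continuous hcont
  rw [Metric.uniformContinuousOn_iff] at huc
  -- one-sided sliding-sup estimate
  have hslide : ∀ ε > (0 : ℝ), ∃ δ > (0 : ℝ), ∀ a ∈ Icc t0 t, ∀ b ∈ Icc t0 t,
      dist a b < δ → φ a ≤ φ b + ε := by
    intro ε hε
    obtain ⟨δ, hδ, hδ'⟩ := huc ε hε
    refine ⟨δ, hδ, fun a ha b hb hab => ?_⟩
    refine csSup_le (hne a) ?_
    rintro y ⟨u, hu, rfl⟩
    have hv : u - a + b ∈ Icc (b - τ) b := ⟨by linarith [hu.1], by linarith [hu.2]⟩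
    have hud : u ∈ Icc (t0 - τ) t := hsub a ha hu
    have hvd : u - a + b ∈ Icc (t0 - τ) t := hsub b hb hv
    have hdist : dist u (u - a + b) < δ := by
      rw [Real.dist_eq] at hab ⊢
      have : |u - (u - a + b)| = |a - b| := by ring_nf
      rw [this]; exact hab
    have := hδ' u hud (u - a + b) hvd hdist
    rw [Real.dist_eq, abs_sub_lt_iff] at this
    have := this.1
    linarith [hle b hb (u - a + b) hv]
  -- continuity of φ on [t0, t]
  have hφcont : ContinuousOn φ (Icc t0 t) := by
    rw [Metric.continuousOn_iff]
    intro x hx ε hε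
    obtain ⟨δ, hδ, hδ'⟩ := hslide (ε / 2) (by linarith)
    refine ⟨δ, hδ, fun y hy hyx => ?_⟩
    have h1 := hδ' y hy x hx hyx
    have h2 := hδ' x hx y hy (by rwa [dist_comm])
    rw [Real.dist_eq, abs_sub_lt_iff]
    constructor <;> linarith
  -- integrability of φ
  have hφint : ∀ x ∈ Icc t0 t, IntervalIntegrable φ volume t0 x := by
    intro x hx
    exact (hφcont.mono (Icc_subset_Icc le_rfl hx.2)).intervalIntegrable_of_Icc hx.1
  set G : ℝ → ℝ := fun x => ∫ s in t0..x, φ s with hGdef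
  have hG0 : ∀ x ∈ Icc t0 t, 0 ≤ G x := by
    intro x hx
    exact intervalIntegral.integral_nonneg hx.1 fun u hu => hφ0 u ⟨hu.1, hu.2.trans hx.2⟩
  have hGmono : ∀ u ∈ Icc t0 t, ∀ x ∈ Icc t0 t, u ≤ x → G u ≤ G x := by
    intro u hu x hx hux
    refine intervalIntegral.integral_mono_interval le_rfl hu.1 hux ?_ (hφint x hx)
    filter_upwards [ae_restrict_mem measurableSet_Ioc] with s hs
    exact hφ0 s ⟨hs.1.le, hs.2.trans hx.2⟩
  -- key inequality : φ ℓ ≤ (K + φ t0) + L * G ℓ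
  have key : ∀ ℓ ∈ Icc t0 t, φ ℓ ≤ (K + φ t0) + L * G ℓ := by
    intro ℓ hℓ
    have hGℓ : 0 ≤ L * G ℓ := mul_nonneg hL (hG0 ℓ hℓ)
    have hφt0 : 0 ≤ φ t0 := hφ0 t0 ⟨le_rfl, ht⟩
    refine csSup_le (hne ℓ) ?_
    rintro y ⟨u, hu, rfl⟩
    rcases le_total u t0 with h | h
    · have : ψ u ≤ φ t0 := hle t0 ⟨le_rfl, ht⟩ u ⟨by linarith [hu.1, hℓ.1], h⟩
      linarith
    · have hu2 : u ∈ Icc t0 t := ⟨h, hu.2.trans hℓ.2⟩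
      have h1 := hineq u hu2
      have h2 : (∫ s in t0..u, φ s) ≤ G ℓ := hGmono u hu2 ℓ hℓ hu.2
      have h3 : L * (∫ s in t0..u, φ s) ≤ L * G ℓ := mul_le_mul_of_nonneg_left h2 hL
      have h4 : ψ u ≤ K + L * (∫ s in t0..u, φ s) := h1
      linarith
  -- FTC: right derivative of G is φ
  have hderiv : ∀ x ∈ Ico t0 t, HasDerivWithinAt G (φ x) (Ici x) x := by
    intro x hx
    have hxt : x ∈ Icc t0 t := ⟨hx.1, hx.2.le⟩
    have hmem : Icc x t ∈ 𝓝[Ioi x] x := Icc_mem_nhdsGT_of_mem ⟨le_rfl, hx.2⟩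
    have hcx : ContinuousOn φ (Icc x t) := hφcont.mono (Icc_subset_Icc hx.1 le_rfl)
    have hmeas : StronglyMeasurableAtFilter φ (𝓝[Ioi x] x) volume :=
      ⟨Icc x t, hmem, (hcx.aestronglyMeasurable measurableSet_Icc)⟩
    refine intervalIntegral.integral_hasDerivWithinAt_right (s := Ici x) (t := Ioi x)
      (hφint x hxt) hmeas ?_
    exact (hcx x ⟨le_rfl, hx.2.le⟩).mono_of_mem_nhdsWithin hmem
  have hGcont : ContinuousOn G (Icc t0 t) := by
    have := intervalIntegral.continuousOn_primitive_interval
      (a := t0) (b := t) (μ := volume) (f := φ) ?_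
    · rwa [uIcc_of_le ht] at this
    · rw [uIcc_of_le ht]
      exact hφcont.integrableOn_compact isCompact_Icc
  -- Gronwall
  have hgr := norm_le_gronwallBound_of_norm_deriv_right_le (f := G) (f' := φ)
    (δ := 0) (K := L) (ε := K + φ t0) (a := t0) (b := t) hGcont hderiv
    (by simp [hGdef]) ?_
  · intro ℓ hℓ
    have hb := hgr ℓ hℓ
    rw [Real.norm_eq_abs, abs_of_nonneg (hG0 ℓ hℓ)] at hb
    have hk := key ℓ hℓ
    have hLG : L * G ℓ ≤ L * gronwallBound 0 L (K + φ t0) (ℓ - t0) :=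
      mul_le_mul_of_nonneg_left hb hL
    rcases eq_or_ne L 0 with hL0 | hL0
    · subst hL0
      simp only [zero_mul, Real.exp_zero, mul_one] at *
      linarith
    · rw [gronwallBound_of_K_ne_0 hL0] at hLG
      have hexp : L * (0 * Real.exp (L * (ℓ - t0)) +
          (K + φ t0) / L * (Real.exp (L * (ℓ - t0)) - 1)) =
          (K + φ t0) * (Real.exp (L * (ℓ - t0)) - 1) := by
        field_simp
        ring
      rw [hexp] at hLG
      calc φ ℓ ≤ (K + φ t0) + L * G ℓ := hk
        _ ≤ (K + φ t0) + (K + φ t0) * (Real.exp (L * (ℓ - t0)) - 1) := by linarith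
        _ = (K + φ t0) * Real.exp (L * (ℓ - t0)) := by ring
  · intro x hx
    have hxt : x ∈ Icc t0 t := ⟨hx.1, hx.2.le⟩
    rw [Real.norm_eq_abs, Real.norm_eq_abs, abs_of_nonneg (hφ0 x hxt),
      abs_of_nonneg (hG0 x hxt)]
    linarith [key x hxt]
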